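/- Let 0 < δ < 1 < L and let G_δ^L : ℝ → ℝ be defined by G_δ^L(s) = (s² − δ²)/(2δ) + (log δ − 1)s + 1 for s ≤ δ, G_δ^L(s) = s(log s − 1) + 1 for δ < s < L, and G_δ^L(s) = (s² − L²)/(2L) + (log L − 1)s + 1 for s ≥ L, with derivative (G_δ^L)'(s) = s/δ + log δ − 1 for s ≤ δ, log s for δ < s < L, and s/L + log L − 1 for s ≥ L. Then: (i) for every s ≤ 0, min{ G_δ^L(s), s · (G_δ^L)'(s) } ≥ s²/(2δ); and (ii) there exists a constant C > 0, depending only on L (and not on δ or s), such that for every s ≥ 0, min{ G_δ^L(s), s · (G_δ^L)'(s) } ≥ s²/(4L) − C. -/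

import Mathlib

/-- The regularized entropy `G_δ^L`. -/
noncomputable def Gdl (δ L s : ℝ) : ℝ :=
  if s ≤ δ then (s ^ 2 - δ ^ 2) / (2 * δ) + (Real.log δ - 1) * s + 1
  else if s < L then s * (Real.log s - 1) + 1
  else (s ^ 2 - L ^ 2) / (2 * L) + (Real.log L - 1) * s + 1

/-- The first derivative of the regularized entropy `G_δ^L`. -/
noncomputable def Gdl' (δ L s : ℝ) : ℝ :=
  if s ≤ δ then s / δ + Real.log δ - 1
  else if s < L then Real.log s
  else s / L + Real.log L - 1

lemma xlogx_lb (x : ℝ) (hx : 0 < x) : x - 1 ≤ x * Real.log x := by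
  have h := Real.log_le_sub_one_of_pos (show (0:ℝ) < x⁻¹ from inv_pos.mpr hx)
  rw [Real.log_inv] at h
  have h2 := mul_le_mul_of_nonneg_left h hx.le
  have h3 : x * x⁻¹ = 1 := mul_inv_cancel₀ hx.ne'
  nlinarith

/-- Coercivity of the regularized entropy: for `0 < δ < 1 < L`,
(i) `min {G_δ^L(s), s (G_δ^L)'(s)} ≥ s²/(2δ)` for all `s ≤ 0`; and
(ii) there is a constant `C > 0` depending only on `L` (not on `δ` or `s`) with
`min {G_δ^L(s), s (G_δ^L)'(s)} ≥ s²/(4L) - C` for all `s ≥ 0`. -/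
theorem stmt12 (L : ℝ) (hL : 1 < L) :
    (∀ δ : ℝ, 0 < δ → δ < 1 → ∀ s ≤ (0 : ℝ),
      s ^ 2 / (2 * δ) ≤ min (Gdl δ L s) (s * Gdl' δ L s)) ∧
    (∃ C > (0 : ℝ), ∀ δ : ℝ, 0 < δ → δ < 1 → ∀ s ≥ (0 : ℝ),
      s ^ 2 / (4 * L) - C ≤ min (Gdl δ L s) (s * Gdl' δ L s)) := by
  constructor
  · intro δ hδ hδ1 s hs
    have hsδ : s ≤ δ := hs.trans hδ.le
    have hlog : Real.log δ ≤ 0 := Real.log_nonpos hδ.le hδ1.le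
    have h1 : 0 ≤ (Real.log δ - 1) * s := by nlinarith
    simp only [Gdl, Gdl', if_pos hsδ]
    apply le_min
    · have hA : (s ^ 2 - δ ^ 2) / (2 * δ) = s ^ 2 / (2 * δ) - δ / 2 := by
        field_simp
      rw [hA]; linarith
    · have hB : s * (s / δ + Real.log δ - 1) = s ^ 2 / δ + (Real.log δ - 1) * s := by
        field_simp; ring
      have hC : s ^ 2 / δ - s ^ 2 / (2 * δ) = s ^ 2 / (2 * δ) := by
        field_simp; ring
      have hD : 0 ≤ s ^ 2 / (2 * δ) := div_nonneg (sq_nonneg s) (by linarith)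
      rw [hB]; linarith
  · refine ⟨4 * L, by linarith, ?_⟩
    intro δ hδ hδ1 s hs
    have h4L : (0:ℝ) < 4 * L := by linarith
    by_cases h1 : s ≤ δ
    · -- 0 ≤ s ≤ δ < 1
      have hlog : Real.log δ ≤ 0 := Real.log_nonpos hδ.le hδ1.le
      have hs1 : s ≤ 1 := h1.trans hδ1.le
      have hsq : s ^ 2 ≤ 1 := by nlinarith
      have hsmall : s ^ 2 / (4 * L) ≤ 1 / 4 := by
        rw [div_le_div_iff₀ h4L (by norm_num)]; nlinarith
      have hdl : δ - 1 ≤ δ * Real.log δ := xlogx_lb δ hδ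
      have hslog : δ * Real.log δ ≤ s * Real.log δ := mul_le_mul_of_nonpos_right h1 hlog
      simp only [Gdl, Gdl', if_pos h1]
      apply le_min
      · have hA : (s ^ 2 - δ ^ 2) / (2 * δ) = s ^ 2 / (2 * δ) - δ / 2 := by
          field_simp
        have hD : 0 ≤ s ^ 2 / (2 * δ) := div_nonneg (sq_nonneg s) (by linarith)
        rw [hA]; nlinarith
      · have hB : s * (s / δ + Real.log δ - 1) = s ^ 2 / δ + s * Real.log δ - s := by
          field_simp
        have hD : 0 ≤ s ^ 2 / δ := div_nonneg (sq_nonneg s) hδ.le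
        rw [hB]; linarith
    · push_neg at h1
      have hspos : 0 < s := hδ.trans h1
      have hxl : s - 1 ≤ s * Real.log s := xlogx_lb s hspos
      by_cases h2 : s < L
      · -- δ < s < L
        have hsmall : s ^ 2 / (4 * L) ≤ L / 4 := by
          rw [div_le_div_iff₀ h4L (by norm_num)]; nlinarith
        simp only [Gdl, Gdl', if_neg (not_le.mpr h1), if_pos h2]
        apply le_min
        · nlinarith
        · nlinarith
      · push_neg at h2
        have hlogL : 0 ≤ Real.log L := Real.log_nonneg hL.le
        have hslogL : 0 ≤ Real.log L * s := mul_nonneg hlogL hs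
        have hC : s ^ 2 / (4 * L) - s + L = (s - 2 * L) ^ 2 / (4 * L) := by
          field_simp; ring
        have hD : 0 ≤ (s - 2 * L) ^ 2 / (4 * L) := div_nonneg (sq_nonneg _) h4L.le
        have hx : s - L ≤ s ^ 2 / (4 * L) := by linarith
        simp only [Gdl, Gdl', if_neg (not_le.mpr h1), if_neg (not_lt.mpr h2)]
        apply le_min
        · have hA : (s ^ 2 - L ^ 2) / (2 * L) = 2 * (s ^ 2 / (4 * L)) - L / 2 := by
            field_simp; ring
          rw [hA]; nlinarith
        · have hB : s * (s / L + Real.log L - 1) =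
              4 * (s ^ 2 / (4 * L)) + Real.log L * s - s := by
            field_simp
          rw [hB]; nlinarith
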